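/- arXiv:1910.02087 — 3 statements merged into one kernel-verified Lean document; each statement's English description precedes it below -/
import Mathlib

section
/- Let V be a real-valued random variable whose distribution function F is globally Lipschitz continuous with constant M > 0, and let Φ denote the standard normal distribution function. Then for every h > 0, sup_{s∈ℝ} | E[Φ((s − V)/h)] − F(s) | ≤ M h √(2/π). -/
open MeasureTheory Filter Topology

/-- The standard normal cumulative distribution function
`Φ(u) = ∫_{-∞}^u (2π)^{-1/2} exp(-w²/2) dw`. -/
noncomputable def stdGaussianCDF (u : ℝ) : ℝ :=
  ∫ w in Set.Iic u, (Real.sqrt (2 * Real.pi))⁻¹ * Real.exp (-(w ^ 2) / 2)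

section Aux
open Real

noncomputable def phiAux (w : ℝ) : ℝ := (Real.sqrt (2 * Real.pi))⁻¹ * Real.exp (-(w ^ 2) / 2)

lemma phiAux_nonneg (w : ℝ) : 0 ≤ phiAux w :=
  mul_nonneg (inv_nonneg.2 (Real.sqrt_nonneg _)) (Real.exp_pos _).le

lemma exp_rw : (fun w : ℝ => Real.exp (-(w ^ 2) / 2)) = fun w => Real.exp (-(1/2 : ℝ) * w ^ 2) := by
  funext w; ring_nf

lemma phiAux_continuous : Continuous phiAux := by
  unfold phiAux
  fun_prop

lemma integrable_expAux : Integrable (fun w : ℝ => Real.exp (-(w ^ 2) / 2)) := by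
  rw [exp_rw]; exact integrable_exp_neg_mul_sq (by norm_num)

lemma phiAux_integrable : Integrable phiAux :=
  integrable_expAux.const_mul _

lemma sqrt_two_pi_pos : (0:ℝ) < Real.sqrt (2 * Real.pi) :=
  Real.sqrt_pos.2 (by positivity)

lemma integral_phiAux : ∫ w, phiAux w = 1 := by
  unfold phiAux
  rw [integral_const_mul, exp_rw, integral_gaussian]
  rw [show Real.pi / (1/2 : ℝ) = 2 * Real.pi by ring]
  exact inv_mul_cancel₀ sqrt_two_pi_pos.ne'

lemma integral_Ioi_mul_exp : ∫ x in Set.Ioi (0:ℝ), x * Real.exp (-(x ^ 2) / 2) = 1 := by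
  have hderiv : ∀ x ∈ Set.Ioi (0:ℝ), HasDerivAt (fun x : ℝ => -Real.exp (-(x ^ 2) / 2))
      (x * Real.exp (-(x ^ 2) / 2)) x := by
    intro x _
    have h1 : HasDerivAt (fun x : ℝ => -(x ^ 2) / 2) (-x) x := by
      have := ((hasDerivAt_pow 2 x).neg).div_const 2
      exact this.congr_deriv (by norm_num; ring)
    have := (h1.exp).neg
    exact this.congr_deriv (by ring)
  have hint : IntegrableOn (fun x : ℝ => x * Real.exp (-(x ^ 2) / 2)) (Set.Ioi 0) := by
    have : Integrable (fun x : ℝ => x * Real.exp (-(1/2 : ℝ) * x ^ 2)) :=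
      integrable_mul_exp_neg_mul_sq (by norm_num)
    have e : (fun x : ℝ => x * Real.exp (-(x ^ 2) / 2))
        = fun x : ℝ => x * Real.exp (-(1/2 : ℝ) * x ^ 2) := by
      funext x; ring_nf
    rw [e]; exact this.integrableOn
  have htend : Tendsto (fun x : ℝ => -Real.exp (-(x ^ 2) / 2)) atTop (𝓝 0) := by
    rw [show (0:ℝ) = -0 by ring]
    refine (Real.tendsto_exp_atBot.comp ?_).neg
    have h1 : Tendsto (fun x : ℝ => x ^ 2 / 2) atTop atTop :=
      (tendsto_pow_atTop two_ne_zero).atTop_div_const (by norm_num)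
    have h2 : Tendsto (fun x : ℝ => -(x ^ 2) / 2) atTop atBot := by
      simpa [neg_div] using tendsto_neg_atBot_iff.2 h1
    exact h2
  have := integral_Ioi_of_hasDerivAt_of_tendsto
    (by fun_prop : Continuous fun x : ℝ => -Real.exp (-(x ^ 2) / 2)).continuousWithinAt
    hderiv hint htend
  rw [this]; simp

lemma integral_abs_mul_exp : ∫ x : ℝ, |x| * Real.exp (-(x ^ 2) / 2) = 2 := by
  have e : (fun x : ℝ => |x| * Real.exp (-(x ^ 2) / 2))
      = fun x : ℝ => |x| * Real.exp (-(|x| ^ 2) / 2) := by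
    funext x; rw [sq_abs]
  rw [e, integral_comp_abs (f := fun x : ℝ => x * Real.exp (-(x ^ 2) / 2)),
    integral_Ioi_mul_exp, mul_one]

lemma sqrt_identity : (Real.sqrt (2 * Real.pi))⁻¹ * 2 = Real.sqrt (2 / Real.pi) := by
  rw [show (2 / Real.pi) = 2 ^ 2 / (2 * Real.pi) by ring,
    Real.sqrt_div (by positivity), Real.sqrt_sq (by norm_num)]
  ring

lemma integrable_abs_mul_exp : Integrable (fun x : ℝ => |x| * Real.exp (-(x ^ 2) / 2)) := by
  have : Integrable (fun x : ℝ => x * Real.exp (-(1/2 : ℝ) * x ^ 2)) :=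
    integrable_mul_exp_neg_mul_sq (by norm_num)
  have h2 := this.abs
  have e : (fun x : ℝ => |x * Real.exp (-(1/2 : ℝ) * x ^ 2)|)
      = fun x : ℝ => |x| * Real.exp (-(x ^ 2) / 2) := by
    funext x
    rw [abs_mul, abs_of_pos (Real.exp_pos _)]
    ring_nf
  rwa [e] at h2

lemma phiAux_abs_integrable : Integrable (fun w : ℝ => phiAux w * |w|) := by
  have := integrable_abs_mul_exp.const_mul (Real.sqrt (2 * Real.pi))⁻¹
  have e : (fun x : ℝ => (Real.sqrt (2 * Real.pi))⁻¹ * (|x| * Real.exp (-(x ^ 2) / 2)))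
      = fun w : ℝ => phiAux w * |w| := by
    funext x; unfold phiAux; ring
  rwa [e] at this

lemma integral_phiAux_abs : ∫ w, phiAux w * |w| = Real.sqrt (2 / Real.pi) := by
  have e : (fun w : ℝ => phiAux w * |w|)
      = fun x : ℝ => (Real.sqrt (2 * Real.pi))⁻¹ * (|x| * Real.exp (-(x ^ 2) / 2)) := by
    funext x; unfold phiAux; ring
  rw [e, integral_const_mul, integral_abs_mul_exp, sqrt_identity]

end Aux

/-- **Smoothing-bias bound (from the proof of Lemma 2).** If the distribution function
`F(s) = P(V ≤ s)` of a real random variable `V` is globally Lipschitz with constant `M > 0`,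
then for every bandwidth `h > 0`,
`sup_s |E[Φ((s − V)/h)] − F(s)| ≤ M h √(2/π)`. -/
theorem smoothing_bias_bound
    {Ω : Type*} [MeasurableSpace Ω] (P : Measure Ω) [IsProbabilityMeasure P]
    (V : Ω → ℝ) (hV : Measurable V)
    (M : ℝ) (hM : 0 < M)
    (hLip : ∀ s u : ℝ,
      |(P {ω | V ω ≤ s}).toReal - (P {ω | V ω ≤ u}).toReal| ≤ M * |s - u|)
    (h : ℝ) (hh : 0 < h) :
    ∀ s : ℝ,
      |(∫ ω, stdGaussianCDF ((s - V ω) / h) ∂P) - (P {ω | V ω ≤ s}).toReal|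
        ≤ M * h * Real.sqrt (2 / Real.pi) := by
  intro s
  classical
  let F : ℝ → ℝ := fun t => (P {ω | V ω ≤ t}).toReal
  have hMeasSet : ∀ t : ℝ, MeasurableSet {ω | V ω ≤ t} := fun t => hV measurableSet_Iic
  have hF0 : ∀ t, 0 ≤ F t := fun t => ENNReal.toReal_nonneg
  have hF1 : ∀ t, F t ≤ 1 := fun t => by
    have h1 : P {ω | V ω ≤ t} ≤ 1 := prob_le_one
    calc (P {ω | V ω ≤ t}).toReal ≤ (1 : ENNReal).toReal :=
          ENNReal.toReal_mono ENNReal.one_ne_top h1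
      _ = 1 := by simp
  have hFcont : Continuous F := by
    have : LipschitzWith (Real.toNNReal M) F := by
      refine LipschitzWith.of_dist_le_mul fun a b => ?_
      rw [Real.dist_eq, Real.dist_eq, Real.coe_toNNReal M hM.le]
      exact hLip a b
    exact this.continuous
  -- the two-variable function
  let f : Ω → ℝ → ℝ := fun ω w => Set.indicator {w | V ω ≤ s - h * w} phiAux w
  let A : Set (Ω × ℝ) := {p | V p.1 ≤ s - h * p.2}
  have hA : MeasurableSet A :=
    measurableSet_le (hV.comp measurable_fst) (measurable_const.sub (measurable_snd.const_mul h))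
  have huncurry : Function.uncurry f = A.indicator (fun p => phiAux p.2) := by
    funext p
    simp only [Function.uncurry, f, A, Set.indicator_apply, Set.mem_setOf_eq]
  have hmeas : AEStronglyMeasurable (Function.uncurry f) (P.prod volume) := by
    rw [huncurry]
    exact ((phiAux_continuous.measurable.comp measurable_snd).indicator hA).aestronglyMeasurable
  have hmaj : Integrable (fun p : Ω × ℝ => phiAux p.2) (P.prod volume) := by
    rw [integrable_prod_iff (f := fun p : Ω × ℝ => phiAux p.2) (phiAux_continuous.measurable.comp measurable_snd).aestronglyMeasurable]
    exact ⟨Eventually.of_forall fun ω => phiAux_integrable, by simpa using integrable_const (μ := P) (∫ y, ‖phiAux y‖)⟩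
  have hIntf : Integrable (Function.uncurry f) (P.prod volume) := by
    refine hmaj.mono' hmeas (Eventually.of_forall fun p => ?_)
    rw [huncurry]
    calc ‖A.indicator (fun p => phiAux p.2) p‖ ≤ ‖phiAux p.2‖ :=
          norm_indicator_le_norm_self _ _
      _ = phiAux p.2 := Real.norm_of_nonneg (phiAux_nonneg _)
  have hswap := integral_integral_swap hIntf
  have inner1 : ∀ ω, (∫ w, f ω w) = stdGaussianCDF ((s - V ω) / h) := by
    intro ω
    have hset : {w : ℝ | V ω ≤ s - h * w} = Set.Iic ((s - V ω) / h) := by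
      ext w
      simp only [Set.mem_setOf_eq, Set.mem_Iic, le_div_iff₀ hh]
      constructor <;> intro hw <;> nlinarith
    show (∫ w, Set.indicator {w | V ω ≤ s - h * w} phiAux w) = _
    rw [hset, integral_indicator measurableSet_Iic]
    rfl
  have inner2 : ∀ w, (∫ ω, f ω w ∂P) = phiAux w * F (s - h * w) := by
    intro w
    have e : (fun ω => f ω w)
        = fun ω => Set.indicator {ω | V ω ≤ s - h * w} (fun _ => phiAux w) ω := by
      funext ω
      simp only [f, Set.indicator_apply, Set.mem_setOf_eq]
    rw [e, integral_indicator (hMeasSet _), setIntegral_const, smul_eq_mul, mul_comm]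
    rfl
  have key : (∫ ω, stdGaussianCDF ((s - V ω) / h) ∂P) = ∫ w, phiAux w * F (s - h * w) := by
    calc (∫ ω, stdGaussianCDF ((s - V ω) / h) ∂P)
        = ∫ ω, (∫ w, f ω w) ∂P := by
          exact integral_congr_ae (Eventually.of_forall fun ω => (inner1 ω).symm)
      _ = ∫ w, (∫ ω, f ω w ∂P) := hswap
      _ = ∫ w, phiAux w * F (s - h * w) :=
          integral_congr_ae (Eventually.of_forall fun w => inner2 w)
  have hFs : F s = ∫ w, phiAux w * F s := by
    rw [integral_mul_const, integral_phiAux, one_mul]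
  have IntA : Integrable (fun w => phiAux w * F (s - h * w)) := by
    refine phiAux_integrable.mono'
      ((phiAux_continuous.mul (hFcont.comp (by fun_prop))).aestronglyMeasurable)
      (Eventually.of_forall fun w => ?_)
    rw [Real.norm_eq_abs, abs_mul, abs_of_nonneg (phiAux_nonneg w)]
    have habs : |F (s - h * w)| ≤ 1 := abs_le.2 ⟨by linarith [hF0 (s - h * w)], hF1 _⟩
    calc phiAux w * |F (s - h * w)| ≤ phiAux w * 1 :=
          mul_le_mul_of_nonneg_left habs (phiAux_nonneg w)
      _ = phiAux w := mul_one _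
  have IntB : Integrable (fun w => phiAux w * F s) := phiAux_integrable.mul_const _
  have hdiff : (∫ ω, stdGaussianCDF ((s - V ω) / h) ∂P) - F s
      = ∫ w, phiAux w * (F (s - h * w) - F s) := by
    calc (∫ ω, stdGaussianCDF ((s - V ω) / h) ∂P) - F s
        = (∫ w, phiAux w * F (s - h * w)) - ∫ w, phiAux w * F s := by rw [key, ← hFs]
      _ = ∫ w, (phiAux w * F (s - h * w) - phiAux w * F s) := (integral_sub IntA IntB).symm
      _ = ∫ w, phiAux w * (F (s - h * w) - F s) := by
          congr 1; funext w; ring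
  have hIntMaj : Integrable (fun w => phiAux w * (M * (h * |w|))) := by
    have h1 := phiAux_abs_integrable.const_mul (M * h)
    have e : (fun w => M * h * (phiAux w * |w|)) = fun w => phiAux w * (M * (h * |w|)) := by
      funext w; ring
    rwa [e] at h1
  have hbound : |∫ w, phiAux w * (F (s - h * w) - F s)|
      ≤ ∫ w, phiAux w * (M * (h * |w|)) := by
    rw [← Real.norm_eq_abs]
    refine norm_integral_le_of_norm_le hIntMaj (Eventually.of_forall fun w => ?_)
    rw [Real.norm_eq_abs, abs_mul, abs_of_nonneg (phiAux_nonneg w)]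
    refine mul_le_mul_of_nonneg_left ?_ (phiAux_nonneg w)
    have := hLip (s - h * w) s
    calc |F (s - h * w) - F s| ≤ M * |s - h * w - s| := this
      _ = M * (h * |w|) := by
          rw [show s - h * w - s = -(h * w) by ring, abs_neg, abs_mul, abs_of_pos hh]
  have hval : (∫ w, phiAux w * (M * (h * |w|))) = M * h * Real.sqrt (2 / Real.pi) := by
    have e : (fun w => phiAux w * (M * (h * |w|))) = fun w => M * h * (phiAux w * |w|) := by
      funext w; ring
    rw [e, integral_const_mul, integral_phiAux_abs]
  show |(∫ ω, stdGaussianCDF ((s - V ω) / h) ∂P) - F s| ≤ M * h * Real.sqrt (2 / Real.pi)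
  rw [hdiff]
  exact hbound.trans_eq hval
end

section
/- Let μ₀ be a probability measure on ℝ^p such that for every θ ∈ ℝ^p with ‖θ‖ = 1, the distribution function of θᵀX under μ₀ is Lipschitz continuous with a constant M > 0 not depending on θ. Let Φ be the standard normal distribution function. Then for every h > 0, sup over all (θ, δ) with ‖θ‖ = 1 of | ∫ Φ((θᵀx − δ)/h) dμ₀(x) − μ₀{x : θᵀx > δ} | ≤ M h √(2/π). In particular, if h = h_n → 0 as n → ∞, this supremum tends to zero. -/
open MeasureTheory Filter Topology

open scoped ENNReal NNReal ProbabilityTheory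
open ProbabilityTheory Set

lemma pdf_eq (w : ℝ) : gaussianPDFReal 0 1 w
    = (Real.sqrt (2 * Real.pi))⁻¹ * Real.exp (-(w ^ 2) / 2) := by
  simp [gaussianPDFReal]

lemma stdGaussianCDF_eq (u : ℝ) :
    stdGaussianCDF u = ((gaussianReal 0 1) (Set.Iic u)).toReal := by
  rw [gaussianReal_apply_eq_integral 0 one_ne_zero,
    ENNReal.toReal_ofReal (setIntegral_nonneg measurableSet_Iic
      fun w _ => gaussianPDFReal_nonneg 0 1 w)]
  unfold stdGaussianCDF
  simp_rw [pdf_eq]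

lemma integral_gaussianReal_eq (g : ℝ → ℝ) :
    ∫ w, g w ∂(gaussianReal 0 1) = ∫ w, gaussianPDFReal 0 1 w * g w := by
  rw [gaussianReal_of_var_ne_zero 0 one_ne_zero]
  have hd : (gaussianPDF 0 1) = fun w => ((gaussianPDFReal 0 1 w).toNNReal : ℝ≥0∞) := rfl
  rw [hd, integral_withDensity_eq_integral_smul (measurable_gaussianPDFReal 0 1).real_toNNReal]
  congr 1; funext w
  simp [NNReal.smul_def, Real.coe_toNNReal _ (gaussianPDFReal_nonneg 0 1 w)]

lemma integrable_abs_gaussian : Integrable (fun w => |w|) (gaussianReal 0 1) := by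
  rw [gaussianReal_of_var_ne_zero 0 one_ne_zero,
    integrable_withDensity_iff (measurable_gaussianPDF 0 1)
      (ae_of_all _ fun x => ENNReal.ofReal_lt_top)]
  have h := (integrable_rpow_mul_exp_neg_mul_sq (b := 1/2) (by norm_num)
      (s := 1) (by norm_num)).abs
  refine (h.const_mul ((Real.sqrt (2 * Real.pi))⁻¹)).congr (ae_of_all _ fun w => ?_)
  show (Real.sqrt (2 * Real.pi))⁻¹ * |w ^ (1:ℝ) * Real.exp (-(1/2) * w ^ 2)|
      = |w| * (gaussianPDF 0 1 w).toReal
  rw [Real.rpow_one, gaussianPDF, ENNReal.toReal_ofReal (gaussianPDFReal_nonneg 0 1 w), pdf_eq,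
    abs_mul, abs_of_pos (Real.exp_pos _)]
  ring_nf

lemma integral_Ioi_exp : ∫ x in Set.Ioi (0:ℝ), Real.exp (-(x ^ 2) / 2) * x = 1 := by
  have hderiv : ∀ x ∈ Set.Ici (0:ℝ), HasDerivAt (fun x => -Real.exp (-(x ^ 2) / 2))
      (Real.exp (-(x ^ 2) / 2) * x) x := by
    intro x _
    have h1 : HasDerivAt (fun x : ℝ => -(x ^ 2) / 2) (-x) x := by
      have h := (hasDerivAt_pow 2 x).neg.div_const 2
      refine h.congr_deriv ?_
      norm_num
      ring
    have h2 := (h1.exp).neg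
    refine h2.congr_deriv ?_
    ring
  have hint : IntegrableOn (fun x => Real.exp (-(x ^ 2) / 2) * x) (Set.Ioi 0) := by
    have h := integrable_rpow_mul_exp_neg_mul_sq (b := 1/2) (by norm_num)
      (s := 1) (by norm_num)
    refine (h.integrableOn).congr_fun (fun x _ => ?_) measurableSet_Ioi
    simp only [Real.rpow_one]
    ring_nf
  have htend : Tendsto (fun x => -Real.exp (-(x ^ 2) / 2)) atTop (𝓝 0) := by
    rw [show (0:ℝ) = -0 by ring]
    refine Tendsto.neg ?_
    have h2 : Tendsto (fun x : ℝ => -(x ^ 2) / 2) atTop atBot := by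
      have := (tendsto_neg_atTop_atBot.comp
        (tendsto_pow_atTop (two_ne_zero) : Tendsto (fun x : ℝ => x ^ 2) atTop atTop)).atBot_div_const
        (by norm_num : (0:ℝ) < 2)
      simpa [Function.comp] using this
    exact Real.tendsto_exp_atBot.comp h2
  have := integral_Ioi_of_hasDerivAt_of_tendsto' hderiv hint htend
  simpa using this

lemma abs_moment : ∫ w, |w| ∂(gaussianReal 0 1) = Real.sqrt (2 / Real.pi) := by
  rw [integral_gaussianReal_eq]
  have hfun : (fun w => gaussianPDFReal 0 1 w * |w|)
      = fun w => (fun t => (Real.sqrt (2 * Real.pi))⁻¹ * (Real.exp (-(t ^ 2) / 2) * t)) |w| := by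
    funext w
    simp only [pdf_eq, sq_abs]
    ring
  rw [hfun, integral_comp_abs (f := fun t => (Real.sqrt (2 * Real.pi))⁻¹ * (Real.exp (-(t ^ 2) / 2) * t)), integral_const_mul, integral_Ioi_exp, mul_one]
  rw [show (2:ℝ) / Real.pi = 4 / (2 * Real.pi) by
        field_simp
        ring,
      Real.sqrt_div (by norm_num) _,
      show Real.sqrt 4 = 2 by
        rw [show (4:ℝ) = 2 ^ 2 by norm_num, Real.sqrt_sq (by norm_num)],
      div_eq_mul_inv]

lemma main_bound {α : Type*} [MeasurableSpace α] (μ : Measure α) [IsProbabilityMeasure μ]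
    (T : α → ℝ) (hT : Measurable T) (M : ℝ) (hM : 0 < M)
    (hLip : ∀ s u : ℝ, |(μ {x | T x ≤ s}).toReal - (μ {x | T x ≤ u}).toReal| ≤ M * |s - u|)
    (h : ℝ) (hh : 0 < h) (δ : ℝ) :
    |(∫ x, stdGaussianCDF ((T x - δ) / h) ∂μ) - (μ {x | δ < T x}).toReal|
      ≤ M * h * Real.sqrt (2 / Real.pi) := by
  set γ := gaussianReal 0 1 with hγ
  have atom : ∀ s : ℝ, μ {x | T x = s} = 0 := by
    intro s
    have key : ∀ ε : ℝ, 0 < ε → (μ {x | T x = s}).toReal ≤ M * ε := by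
      intro ε hε
      have hsub : {x | T x = s} ∪ {x | T x ≤ s - ε} ⊆ {x | T x ≤ s} := by
        rintro x (hx | hx)
        · exact le_of_eq hx
        · have h1 : T x ≤ s - ε := hx
          show T x ≤ s
          linarith
      have hdisj : Disjoint {x | T x = s} {x | T x ≤ s - ε} := by
        rw [Set.disjoint_left]
        intro x hx hx'
        have h1 : T x = s := hx
        have h2 : T x ≤ s - ε := hx'
        linarith
      have hun := measure_union (μ := μ) hdisj (hT measurableSet_Iic)
      have h1 : (μ {x | T x = s}).toReal + (μ {x | T x ≤ s - ε}).toReal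
          ≤ (μ {x | T x ≤ s}).toReal := by
        rw [← ENNReal.toReal_add (measure_ne_top _ _) (measure_ne_top _ _), ← hun]
        exact ENNReal.toReal_mono (measure_ne_top _ _) (measure_mono hsub)
      have h2 := hLip s (s - ε)
      rw [show s - (s - ε) = ε by ring, abs_of_pos hε] at h2
      have h3 := le_abs_self ((μ {x | T x ≤ s}).toReal - (μ {x | T x ≤ s - ε}).toReal)
      linarith
    have h0 : (μ {x | T x = s}).toReal ≤ 0 := by
      by_contra hpos
      push_neg at hpos
      have hk := key ((μ {x | T x = s}).toReal / (2 * M)) (by positivity)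
      have he : M * ((μ {x | T x = s}).toReal / (2 * M)) = (μ {x | T x = s}).toReal / 2 := by
        field_simp
      rw [he] at hk
      linarith
    rcases (ENNReal.toReal_eq_zero_iff _).1 (le_antisymm h0 ENNReal.toReal_nonneg) with h' | h'
    · exact h'
    · exact absurd h' (measure_ne_top _ _)
  have hlt_le : ∀ s : ℝ, μ {x | T x < s} = μ {x | T x ≤ s} := by
    intro s
    have hset : {x | T x ≤ s} = {x | T x < s} ∪ {x | T x = s} := by
      ext x
      simp only [Set.mem_setOf_eq, Set.mem_union]
      exact le_iff_lt_or_eq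
    have hdisj : Disjoint {x | T x < s} {x | T x = s} := by
      rw [Set.disjoint_left]
      intro x hx hx'
      have h1 : T x < s := hx
      have h2 : T x = s := hx'
      linarith
    rw [hset, measure_union hdisj (hT (measurableSet_singleton s)), atom, add_zero]
  have hge : ∀ s : ℝ, (μ {x | s ≤ T x}).toReal = 1 - (μ {x | T x ≤ s}).toReal := by
    intro s
    have hset : {x | s ≤ T x} = {x | T x < s}ᶜ := by
      ext x
      simp [not_lt]
    rw [hset, prob_compl_eq_one_sub (measurableSet_lt hT measurable_const), hlt_le,
      ENNReal.toReal_sub_of_le prob_le_one ENNReal.one_ne_top, ENNReal.toReal_one]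
  have hgt : (μ {x | δ < T x}).toReal = 1 - (μ {x | T x ≤ δ}).toReal := by
    have hset : {x | δ < T x} = {x | T x ≤ δ}ᶜ := by
      ext x
      simp [not_le]
    rw [hset, prob_compl_eq_one_sub (measurableSet_le hT measurable_const),
      ENNReal.toReal_sub_of_le prob_le_one ENNReal.one_ne_top, ENNReal.toReal_one]
  set g : ℝ → ℝ := fun w => (μ {x | δ + h * w ≤ T x}).toReal with hgdef
  have hg_anti : Antitone g := by
    intro w w' hww'
    apply ENNReal.toReal_mono (measure_ne_top _ _)
    apply measure_mono
    intro x hx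
    have h1 : δ + h * w' ≤ T x := hx
    have h2 : h * w ≤ h * w' := mul_le_mul_of_nonneg_left hww' hh.le
    show δ + h * w ≤ T x
    linarith
  have hg_bound : ∀ w, ‖g w‖ ≤ 1 := by
    intro w
    rw [Real.norm_eq_abs, abs_of_nonneg ENNReal.toReal_nonneg]
    simpa using ENNReal.toReal_mono ENNReal.one_ne_top prob_le_one
  have hg_int : Integrable g γ := ⟨hg_anti.measurable.aestronglyMeasurable,
    HasFiniteIntegral.of_bounded (C := 1) (ae_of_all _ hg_bound)⟩
  have hS : MeasurableSet {q : α × ℝ | δ + h * q.2 ≤ T q.1} :=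
    measurableSet_le (measurable_const.add (measurable_snd.const_mul h))
      (hT.comp measurable_fst)
  have step1 : (∫ x, stdGaussianCDF ((T x - δ) / h) ∂μ) = ∫ w, g w ∂γ := by
    have hmeasT : Measurable fun x => (T x - δ) / h := (hT.sub_const δ).div_const h
    have hmono : Monotone fun u : ℝ => γ (Set.Iic u) :=
      fun u v huv => measure_mono (Set.Iic_subset_Iic.2 huv)
    have haem1 : AEMeasurable (fun x => γ (Set.Iic ((T x - δ) / h))) μ :=
      (hmono.measurable.comp hmeasT).aemeasurable
    have e1 : (∫ x, stdGaussianCDF ((T x - δ) / h) ∂μ)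
        = (∫⁻ x, γ (Set.Iic ((T x - δ) / h)) ∂μ).toReal := by
      rw [← integral_toReal haem1 (ae_of_all _ fun x => measure_lt_top γ _)]
      simp_rw [stdGaussianCDF_eq]
      rfl
    have e2 : (∫⁻ x, γ (Set.Iic ((T x - δ) / h)) ∂μ)
        = (μ.prod γ) {q : α × ℝ | δ + h * q.2 ≤ T q.1} := by
      rw [Measure.prod_apply hS]
      refine lintegral_congr fun x => ?_
      congr 1
      ext w
      simp only [Set.mem_Iic, Set.mem_preimage, Set.mem_setOf_eq]
      rw [le_div_iff₀ hh]
      constructor <;> intro hw <;> linarith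
    have haem2 : AEMeasurable (fun w => μ {x | δ + h * w ≤ T x}) γ := by
      have hanti : Antitone (fun w => μ {x | δ + h * w ≤ T x}) := by
        intro w w' hww'
        apply measure_mono
        intro x hx
        have h1 : δ + h * w' ≤ T x := hx
        have h2 : h * w ≤ h * w' := mul_le_mul_of_nonneg_left hww' hh.le
        show δ + h * w ≤ T x
        linarith
      exact hanti.measurable.aemeasurable
    have e3 : (μ.prod γ) {q : α × ℝ | δ + h * q.2 ≤ T q.1}
        = ∫⁻ w, μ {x | δ + h * w ≤ T x} ∂γ := by
      rw [Measure.prod_apply_symm hS]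
      rfl
    rw [e1, e2, e3, ← integral_toReal haem2 (ae_of_all _ fun w => measure_lt_top μ _)]
  have hptw : ∀ w : ℝ, |g w - (μ {x | δ < T x}).toReal| ≤ M * h * |w| := by
    intro w
    have e : g w - (μ {x | δ < T x}).toReal
        = (μ {x | T x ≤ δ}).toReal - (μ {x | T x ≤ δ + h * w}).toReal := by
      rw [show g w = (μ {x | δ + h * w ≤ T x}).toReal from rfl, hge, hgt]
      ring
    rw [e]
    have hl := hLip δ (δ + h * w)
    rw [show δ - (δ + h * w) = -(h * w) by ring, abs_neg, abs_mul, abs_of_pos hh] at hl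
    calc |(μ {x | T x ≤ δ}).toReal - (μ {x | T x ≤ δ + h * w}).toReal|
        ≤ M * (h * |w|) := hl
      _ = M * h * |w| := by ring
  have hsub : (∫ w, g w ∂γ) - (μ {x | δ < T x}).toReal
      = ∫ w, (g w - (μ {x | δ < T x}).toReal) ∂γ := by
    rw [integral_sub hg_int (integrable_const _)]
    simp
  rw [step1, hsub]
  have h1 : |∫ w, (g w - (μ {x | δ < T x}).toReal) ∂γ|
      ≤ ∫ w, |g w - (μ {x | δ < T x}).toReal| ∂γ := by
    simpa [Real.norm_eq_abs] using
      norm_integral_le_integral_norm (μ := γ) (fun w => g w - (μ {x | δ < T x}).toReal)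
  have h2 : ∫ w, |g w - (μ {x | δ < T x}).toReal| ∂γ ≤ ∫ w, M * h * |w| ∂γ := by
    apply integral_mono_of_nonneg (ae_of_all _ fun w => abs_nonneg _)
      (integrable_abs_gaussian.const_mul (M * h)) (ae_of_all _ hptw)
  have h3 : ∫ w, M * h * |w| ∂γ = M * h * Real.sqrt (2 / Real.pi) := by
    rw [integral_const_mul, abs_moment]
  linarith

/-- **Uniform smoothing-bias bound for the FPR (from the proof of Lemma 2).**
If for every unit vector `θ` the distribution function of `θᵀX` under `μ₀` is Lipschitz with a
constant `M > 0` not depending on `θ`, then for every `h > 0` and every `(θ, δ)` with `‖θ‖ = 1`,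
`|∫ Φ((θᵀx − δ)/h) dμ₀(x) − μ₀{x : θᵀx > δ}| ≤ M h √(2/π)`; in particular, if `h = hₙ → 0`,
the supremum of the left-hand side over `{(θ, δ) : ‖θ‖ = 1}` tends to zero. -/
theorem fpr_smoothing_bias_uniform
    {p : ℕ} (μ0 : Measure (EuclideanSpace ℝ (Fin p))) [IsProbabilityMeasure μ0]
    (M : ℝ) (hM : 0 < M)
    (hLip : ∀ θ : EuclideanSpace ℝ (Fin p), ‖θ‖ = 1 → ∀ s u : ℝ,
      |(μ0 {x | ∑ i, θ i * x i ≤ s}).toReal - (μ0 {x | ∑ i, θ i * x i ≤ u}).toReal|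
        ≤ M * |s - u|) :
    (∀ h : ℝ, 0 < h → ∀ (θ : EuclideanSpace ℝ (Fin p)) (δ : ℝ), ‖θ‖ = 1 →
        |(∫ x, stdGaussianCDF ((∑ i, θ i * x i - δ) / h) ∂μ0)
            - (μ0 {x | δ < ∑ i, θ i * x i}).toReal|
          ≤ M * h * Real.sqrt (2 / Real.pi)) ∧
    (∀ hseq : ℕ → ℝ, (∀ n, 0 < hseq n) → Tendsto hseq atTop (𝓝 0) →
        Tendsto (fun n => sSup ((fun q : EuclideanSpace ℝ (Fin p) × ℝ =>
            |(∫ x, stdGaussianCDF ((∑ i, q.1 i * x i - q.2) / hseq n) ∂μ0)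
              - (μ0 {x | q.2 < ∑ i, q.1 i * x i}).toReal|) '' {q | ‖q.1‖ = 1}))
          atTop (𝓝 0)) := by
  have hTmeas : ∀ θ : EuclideanSpace ℝ (Fin p),
      Measurable fun x : EuclideanSpace ℝ (Fin p) => ∑ i, θ i * x i := by
    intro θ
    exact Finset.measurable_sum _ fun i _ =>
      (((measurable_pi_apply i).comp (WithLp.measurable_ofLp 2 (Fin p → ℝ)) : Measurable fun x : EuclideanSpace ℝ (Fin p) => x i)).const_mul (θ i)
  have main : ∀ h : ℝ, 0 < h → ∀ (θ : EuclideanSpace ℝ (Fin p)) (δ : ℝ), ‖θ‖ = 1 →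
      |(∫ x, stdGaussianCDF ((∑ i, θ i * x i - δ) / h) ∂μ0)
          - (μ0 {x | δ < ∑ i, θ i * x i}).toReal|
        ≤ M * h * Real.sqrt (2 / Real.pi) :=
    fun h hh θ δ hθ =>
      main_bound μ0 (fun x => ∑ i, θ i * x i) (hTmeas θ) M hM (hLip θ hθ) h hh δ
  refine ⟨main, ?_⟩
  intro hseq hpos htend
  refine tendsto_of_tendsto_of_tendsto_of_le_of_le (g := fun _ => (0:ℝ))
    (h := fun n => M * hseq n * Real.sqrt (2 / Real.pi)) tendsto_const_nhds ?_ ?_ ?_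
  · have : Tendsto (fun n => M * hseq n * Real.sqrt (2 / Real.pi)) atTop
        (𝓝 (M * 0 * Real.sqrt (2 / Real.pi))) :=
      (tendsto_const_nhds.mul htend).mul tendsto_const_nhds
    simpa using this
  · intro n
    apply Real.sSup_nonneg
    rintro x ⟨q, hq, rfl⟩
    exact abs_nonneg _
  · intro n
    apply Real.sSup_le
    · rintro x ⟨q, hq, rfl⟩
      exact main (hseq n) (hpos n) q.1 q.2 hq
    · have := hpos n
      positivity
end

section
/- Let μ₁ be a probability measure on ℝ^p such that for every θ with ‖θ‖ = 1 the distribution function of θᵀX under μ₁ is Lipschitz uniformly over such θ, and such that no proper linear subspace S ⊂ ℝ^p satisfies μ₁(S) = 1. Let X₁₁, X₁₂, … be i.i.d. with law μ₁, let h = h_{n₁} be a positive sequence tending to zero, and define TPR(θ, δ) = μ₁{x : θᵀx > δ} and T̃PR_{n₁}(θ, δ) = n₁^{-1} Σ_{i=1}^{n₁} Φ((θᵀX₁ᵢ − δ)/h), where Φ is the standard normal distribution function. Then sup over (θ, δ) ∈ Ω of | T̃PR_{n₁}(θ, δ) − TPR(θ, δ) | converges to zero almost surely as n₁ → ∞,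 where Ω = {(θ, δ) ∈ ℝ^p × ℝ : ‖θ‖ = 1}. -/
open MeasureTheory Filter Topology

namespace Lemma2Aux

noncomputable def gpdf (w : ℝ) : ℝ := (Real.sqrt (2 * Real.pi))⁻¹ * Real.exp (-(w ^ 2) / 2)

lemma gpdf_nonneg (w : ℝ) : 0 ≤ gpdf w := by unfold gpdf; positivity

lemma gpdf_eq (w : ℝ) : gpdf w = (Real.sqrt (2 * Real.pi))⁻¹ * Real.exp (-(2⁻¹) * w ^ 2) := by
  unfold gpdf; ring_nf

lemma integrable_gpdf : Integrable gpdf := by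
  have : Integrable (fun w : ℝ => Real.exp (-(2⁻¹ : ℝ) * w ^ 2)) :=
    integrable_exp_neg_mul_sq (by norm_num)
  have h2 := this.const_mul (Real.sqrt (2 * Real.pi))⁻¹
  apply h2.congr
  filter_upwards with w
  rw [gpdf_eq]

lemma integral_gpdf : ∫ w, gpdf w = 1 := by
  have h1 : ∫ w, gpdf w = (Real.sqrt (2 * Real.pi))⁻¹ * ∫ w : ℝ, Real.exp (-(2⁻¹ : ℝ) * w ^ 2) := by
    rw [← integral_const_mul]
    congr 1 with w
    rw [gpdf_eq]
  rw [h1, integral_gaussian]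
  have : (Real.pi / 2⁻¹) = 2 * Real.pi := by ring
  rw [this, inv_mul_cancel₀]
  positivity

lemma cdf_eq (u : ℝ) : stdGaussianCDF u = ∫ w in Set.Iic u, gpdf w := rfl

lemma cdf_nonneg (u : ℝ) : 0 ≤ stdGaussianCDF u := by
  rw [cdf_eq]
  exact setIntegral_nonneg measurableSet_Iic fun w _ => gpdf_nonneg w

lemma cdf_le_one (u : ℝ) : stdGaussianCDF u ≤ 1 := by
  rw [cdf_eq, ← integral_gpdf]
  exact setIntegral_le_integral integrable_gpdf (Eventually.of_forall gpdf_nonneg)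

lemma cdf_mono : Monotone stdGaussianCDF := by
  intro a b hab
  rw [cdf_eq, cdf_eq]
  apply setIntegral_mono_set integrable_gpdf.integrableOn (Eventually.of_forall gpdf_nonneg)
  exact HasSubset.Subset.eventuallyLE (Set.Iic_subset_Iic.2 hab)

lemma cdf_tendsto_atTop : Tendsto stdGaussianCDF atTop (𝓝 1) := by
  have hseq : Tendsto (fun n : ℕ => stdGaussianCDF n) atTop (𝓝 1) := by
    have h := tendsto_setIntegral_of_monotone (f := gpdf) (μ := volume)
      (s := fun n : ℕ => Set.Iic (n : ℝ)) (fun i => measurableSet_Iic)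
      (fun i j hij => Set.Iic_subset_Iic.2 (by exact_mod_cast hij)) ?_
    · have hU : (⋃ n : ℕ, Set.Iic (n : ℝ)) = Set.univ := by
        ext x
        simp only [Set.mem_iUnion, Set.mem_Iic, Set.mem_univ, iff_true]
        obtain ⟨n, hn⟩ := exists_nat_ge x
        exact ⟨n, hn⟩
      rw [hU] at h
      simpa [cdf_eq, integral_gpdf] using h
    · exact integrable_gpdf.integrableOn
  have hbdd : BddAbove (Set.range stdGaussianCDF) := ⟨1, by rintro _ ⟨u, rfl⟩; exact cdf_le_one u⟩
  have hlim := tendsto_atTop_ciSup cdf_mono hbdd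
  have : (⨆ u, stdGaussianCDF u) = 1 := by
    apply le_antisymm (ciSup_le cdf_le_one)
    apply le_of_tendsto hseq
    filter_upwards with n
    exact le_ciSup hbdd _
  rwa [this] at hlim

lemma cdf_tendsto_atBot : Tendsto stdGaussianCDF atBot (𝓝 0) := by
  have hseq : Tendsto (fun n : ℕ => stdGaussianCDF (-(n : ℝ))) atTop (𝓝 0) := by
    have h := tendsto_setIntegral_of_antitone (f := gpdf) (μ := volume)
      (s := fun n : ℕ => Set.Iic (-(n : ℝ))) (fun i => measurableSet_Iic)
      (fun i j hij => Set.Iic_subset_Iic.2 (by exact_mod_cast neg_le_neg (by exact_mod_cast hij)))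
      ⟨0, integrable_gpdf.integrableOn⟩
    have hI : (⋂ n : ℕ, Set.Iic (-(n : ℝ))) = ∅ := by
      ext x
      simp only [Set.mem_iInter, Set.mem_Iic, Set.mem_empty_iff_false, iff_false, not_forall,
        not_le]
      obtain ⟨n, hn⟩ := exists_nat_gt (-x)
      exact ⟨n, by linarith⟩
    rw [hI] at h
    simpa [cdf_eq] using h
  have hbdd : BddBelow (Set.range stdGaussianCDF) := ⟨0, by rintro _ ⟨u, rfl⟩; exact cdf_nonneg u⟩
  have hlim := tendsto_atBot_ciInf cdf_mono hbdd
  have : (⨅ u, stdGaussianCDF u) = 0 := by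
    apply le_antisymm
    · apply ge_of_tendsto hseq
      filter_upwards with n
      exact ciInf_le hbdd _
    · exact le_ciInf cdf_nonneg
  rwa [this] at hlim

/-! ### The linear functional -/

noncomputable def lin {p : ℕ} (θ x : EuclideanSpace ℝ (Fin p)) : ℝ := ∑ k, θ k * x k

lemma lin_eq_inner {p : ℕ} (θ x : EuclideanSpace ℝ (Fin p)) : lin θ x = inner ℝ θ x := by
  simp [lin, PiLp.inner_apply, RCLike.inner_apply, mul_comm]

lemma abs_lin_le {p : ℕ} (θ x : EuclideanSpace ℝ (Fin p)) : |lin θ x| ≤ ‖θ‖ * ‖x‖ := by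
  rw [lin_eq_inner]
  exact abs_real_inner_le_norm θ x

lemma lin_sub {p : ℕ} (θ θ' x : EuclideanSpace ℝ (Fin p)) :
    lin θ x - lin θ' x = lin (θ - θ') x := by
  simp [lin, ← Finset.sum_sub_distrib, sub_mul]

lemma measurable_lin {p : ℕ} (θ : EuclideanSpace ℝ (Fin p)) :
    Measurable (fun x => lin θ x) := by
  have : (fun x => lin θ x) = fun x : EuclideanSpace ℝ (Fin p) => (inner ℝ θ x : ℝ) := by
    ext x; exact lin_eq_inner θ x
  rw [this]
  exact (continuous_const.inner continuous_id).measurable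

/-! ### Nets and grids -/

lemma exists_grid (a b ε : ℝ) (hε : 0 < ε) :
    ∃ s : Finset ℝ, ∀ t ∈ Set.Icc a b, ∃ d ∈ s, t - ε ≤ d ∧ d ≤ t := by
  refine ⟨(Finset.range (⌈(b - a) / ε⌉₊ + 1)).image (fun j : ℕ => a + j * ε), ?_⟩
  intro t ht
  set j := ⌊(t - a) / ε⌋₊ with hj
  have h0 : 0 ≤ (t - a) / ε := div_nonneg (by linarith [ht.1]) hε.le
  have hj1 : (j : ℝ) ≤ (t - a) / ε := Nat.floor_le h0
  have hj2 : (t - a) / ε < j + 1 := Nat.lt_floor_add_one _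
  have hj1' : (j : ℝ) * ε ≤ t - a := by rw [← le_div_iff₀ hε]; exact hj1
  have hj2' : t - a < ((j : ℝ) + 1) * ε := by rw [← div_lt_iff₀ hε]; exact hj2
  refine ⟨a + j * ε, ?_, by nlinarith, by nlinarith⟩
  simp only [Finset.mem_image, Finset.mem_range]
  refine ⟨j, ?_, rfl⟩
  have hle : (j : ℝ) ≤ (b - a) / ε := hj1.trans (by gcongr; exact ht.2)
  have h2 : (j : ℝ) ≤ (⌈(b - a) / ε⌉₊ : ℝ) := hle.trans (Nat.le_ceil _)
  have : j ≤ ⌈(b - a) / ε⌉₊ := by exact_mod_cast h2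
  omega

lemma exists_sphere_net {p : ℕ} (η : ℝ) (hη : 0 < η) :
    ∃ T : Finset (EuclideanSpace ℝ (Fin p)), (∀ θ ∈ T, ‖θ‖ = 1) ∧
      ∀ θ : EuclideanSpace ℝ (Fin p), ‖θ‖ = 1 → ∃ θ' ∈ T, ‖θ - θ'‖ < η := by
  classical
  have hc : IsCompact (Metric.sphere (0 : EuclideanSpace ℝ (Fin p)) 1) := isCompact_sphere 0 1
  have hcover : Metric.sphere (0 : EuclideanSpace ℝ (Fin p)) 1 ⊆
      ⋃ θ ∈ Metric.sphere (0 : EuclideanSpace ℝ (Fin p)) 1, Metric.ball θ η := fun θ hθ =>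
    Set.mem_biUnion hθ (Metric.mem_ball_self hη)
  obtain ⟨b, hb_sub, hb_fin, hb_cover⟩ :=
    hc.elim_finite_subcover_image (fun θ _ => Metric.isOpen_ball) hcover
  refine ⟨hb_fin.toFinset, ?_, ?_⟩
  · intro θ hθ
    have := hb_sub (hb_fin.mem_toFinset.mp hθ)
    simpa [Metric.mem_sphere, dist_zero_right] using this
  · intro θ hθ
    have hθ' : θ ∈ Metric.sphere (0 : EuclideanSpace ℝ (Fin p)) 1 := by
      simpa [Metric.mem_sphere, dist_zero_right] using hθ
    obtain ⟨θ', hθ'b, hθ'ball⟩ := Set.mem_iUnion₂.mp (hb_cover hθ')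
    refine ⟨θ', hb_fin.mem_toFinset.mpr hθ'b, ?_⟩
    simpa [Metric.mem_ball, dist_eq_norm] using hθ'ball

/-! ### Indicators and averages -/

lemma ind_nonneg {α : Type*} (A : Set α) (x : α) :
    0 ≤ A.indicator (fun _ => (1 : ℝ)) x :=
  Set.indicator_nonneg (fun _ _ => zero_le_one) x

lemma ind_le_one {α : Type*} (A : Set α) (x : α) :
    A.indicator (fun _ => (1 : ℝ)) x ≤ 1 := by
  classical
  by_cases hx : x ∈ A <;> simp [hx]

lemma avg1_le {n : ℕ} (hn : 1 ≤ n) (f g : ℕ → ℝ) (c : ℝ)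
    (hfg : ∀ i ∈ Finset.range n, f i ≤ g i + c) :
    (n : ℝ)⁻¹ * ∑ i ∈ Finset.range n, f i ≤ (n : ℝ)⁻¹ * ∑ i ∈ Finset.range n, g i + c := by
  have hnpos : (0 : ℝ) < n := by exact_mod_cast hn
  have h1 : ∑ i ∈ Finset.range n, f i ≤ ∑ i ∈ Finset.range n, (g i + c) := Finset.sum_le_sum hfg
  rw [Finset.sum_add_distrib, Finset.sum_const, Finset.card_range, nsmul_eq_mul] at h1
  have h2 := mul_le_mul_of_nonneg_left h1 (inv_nonneg.mpr hnpos.le)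
  calc (n : ℝ)⁻¹ * ∑ i ∈ Finset.range n, f i
      ≤ (n : ℝ)⁻¹ * (∑ i ∈ Finset.range n, g i + n * c) := h2
    _ = (n : ℝ)⁻¹ * ∑ i ∈ Finset.range n, g i + c := by
        field_simp

lemma avg2_le {n : ℕ} (hn : 1 ≤ n) (f g1 g2 : ℕ → ℝ) (c : ℝ)
    (hfg : ∀ i ∈ Finset.range n, f i ≤ g1 i + g2 i + c) :
    (n : ℝ)⁻¹ * ∑ i ∈ Finset.range n, f i ≤
      (n : ℝ)⁻¹ * ∑ i ∈ Finset.range n, g1 i + (n : ℝ)⁻¹ * ∑ i ∈ Finset.range n, g2 i + c := by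
  have h := avg1_le hn f (fun i => g1 i + g2 i) c hfg
  rw [Finset.sum_add_distrib, mul_add] at h
  exact h

/-! ### toReal measure helpers -/

lemma mtoReal_mono {α : Type*} [MeasurableSpace α] (μ : Measure α) [IsProbabilityMeasure μ]
    {A B : Set α} (h : A ⊆ B) : (μ A).toReal ≤ (μ B).toReal :=
  ENNReal.toReal_mono (measure_ne_top μ B) (measure_mono h)

lemma mtoReal_union_le {α : Type*} [MeasurableSpace α] (μ : Measure α) [IsProbabilityMeasure μ]
    (A B : Set α) : (μ (A ∪ B)).toReal ≤ (μ A).toReal + (μ B).toReal := by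
  have h := measure_union_le (μ := μ) A B
  have h2 := ENNReal.toReal_mono (a := μ (A ∪ B)) (b := μ A + μ B)
    (by simp [measure_ne_top]) h
  rwa [ENNReal.toReal_add (measure_ne_top _ _) (measure_ne_top _ _)] at h2

lemma mtoReal_le_one {α : Type*} [MeasurableSpace α] (μ : Measure α) [IsProbabilityMeasure μ]
    (A : Set α) : (μ A).toReal ≤ 1 := by
  have := ENNReal.toReal_mono (a := μ A) (b := 1) ENNReal.one_ne_top prob_le_one
  simpa using this

lemma mtoReal_compl {α : Type*} [MeasurableSpace α] (μ : Measure α) [IsProbabilityMeasure μ]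
    {A : Set α} (hA : MeasurableSet A) : (μ Aᶜ).toReal = 1 - (μ A).toReal := by
  rw [measure_compl hA (measure_ne_top μ A), measure_univ,
    ENNReal.toReal_sub_of_le prob_le_one ENNReal.one_ne_top]
  simp

end Lemma2Aux

open Lemma2Aux in
lemma slln_indicator {p : ℕ} {Ωs : Type*} [MeasurableSpace Ωs] (P : Measure Ωs)
    [IsProbabilityMeasure P]
    (μ1 : Measure (EuclideanSpace ℝ (Fin p))) [IsProbabilityMeasure μ1]
    (X : ℕ → Ωs → EuclideanSpace ℝ (Fin p)) (hXm : ∀ i, Measurable (X i))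
    (hindep : ProbabilityTheory.iIndepFun X P)
    (hid : ∀ i, Measure.map (X i) P = μ1)
    (A : Set (EuclideanSpace ℝ (Fin p))) (hA : MeasurableSet A) :
    ∀ᵐ ω ∂P, Tendsto (fun n : ℕ => (n : ℝ)⁻¹ *
        ∑ i ∈ Finset.range n, A.indicator (fun _ => (1 : ℝ)) (X i ω))
      atTop (𝓝 (μ1 A).toReal) := by
  set f : EuclideanSpace ℝ (Fin p) → ℝ := A.indicator (fun _ => (1 : ℝ)) with hf_def
  have hfm : Measurable f := measurable_const.indicator hA
  have hfint : Integrable f μ1 := (integrable_const (1 : ℝ)).indicator hA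
  set Y : ℕ → Ωs → ℝ := fun i ω => f (X i ω) with hY_def
  have hYint : Integrable (Y 0) P := by
    have := (integrable_map_measure hfm.aestronglyMeasurable (hXm 0).aemeasurable).mp
      (by rwa [hid 0])
    exact this
  have hYindep : Pairwise (Function.onFun (ProbabilityTheory.IndepFun · · P) Y) := by
    intro i j hij
    exact (hindep.indepFun hij).comp hfm hfm
  have hYident : ∀ i, ProbabilityTheory.IdentDistrib (Y i) (Y 0) P P := by
    intro i
    have hXid : ProbabilityTheory.IdentDistrib (X i) (X 0) P P :=
      ⟨(hXm i).aemeasurable, (hXm 0).aemeasurable, by rw [hid i, hid 0]⟩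
    exact hXid.comp hfm
  have hE : (∫ ω, Y 0 ω ∂P) = (μ1 A).toReal := by
    have h1 : (∫ ω, Y 0 ω ∂P) = ∫ x, f x ∂(Measure.map (X 0) P) :=
      (integral_map (hXm 0).aemeasurable hfm.aestronglyMeasurable).symm
    rw [h1, hid 0, hf_def, integral_indicator hA]
    simp [Measure.restrict_apply_univ]
    rfl
  have h := ProbabilityTheory.strong_law_ae Y hYint hYindep hYident
  rw [hE] at h
  filter_upwards [h] with ω hω
  simpa [smul_eq_mul] using hω

set_option maxHeartbeats 2000000 in
open Lemma2Aux in
/-- **TPR half of Lemma 2.** Suppose that under `μ₁` the distribution functions of `θᵀX` are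
Lipschitz uniformly over unit vectors `θ` and no proper linear subspace has `μ₁`-measure one.
If `X₁₁, X₁₂, …` are i.i.d. with law `μ₁` and the bandwidths `h_{n₁} > 0` tend to zero, then
`sup_{(θ,δ) ∈ Ω} |T̃PR_{n₁}(θ, δ) − TPR(θ, δ)| → 0` almost surely, where
`Ω = {(θ,δ) : ‖θ‖ = 1}`, `TPR(θ,δ) = μ₁{x : θᵀx > δ}` and
`T̃PR_{n₁}(θ,δ) = n₁⁻¹ ∑_{i<n₁} Φ((θᵀX₁ᵢ − δ)/h_{n₁})`. -/
theorem lemma2_tpr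
    {p : ℕ} {Ωs : Type*} [MeasurableSpace Ωs] (P : Measure Ωs) [IsProbabilityMeasure P]
    (μ1 : Measure (EuclideanSpace ℝ (Fin p))) [IsProbabilityMeasure μ1]
    (M : ℝ) (hM : 0 < M)
    (hLip : ∀ θ : EuclideanSpace ℝ (Fin p), ‖θ‖ = 1 → ∀ s u : ℝ,
      |(μ1 {x | ∑ i, θ i * x i ≤ s}).toReal - (μ1 {x | ∑ i, θ i * x i ≤ u}).toReal|
        ≤ M * |s - u|)
    (hsub : ∀ S : Submodule ℝ (EuclideanSpace ℝ (Fin p)), S ≠ ⊤ →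
      μ1 (S : Set (EuclideanSpace ℝ (Fin p))) ≠ 1)
    (X : ℕ → Ωs → EuclideanSpace ℝ (Fin p))
    (hXm : ∀ i, Measurable (X i))
    (hindep : ProbabilityTheory.iIndepFun X P)
    (hid : ∀ i, Measure.map (X i) P = μ1)
    (h : ℕ → ℝ) (hpos : ∀ n, 0 < h n) (hlim : Tendsto h atTop (𝓝 0)) :
    ∀ᵐ ω ∂P, Tendsto (fun n1 : ℕ =>
        sSup ((fun q : EuclideanSpace ℝ (Fin p) × ℝ =>
          |(n1 : ℝ)⁻¹ * ∑ i ∈ Finset.range n1,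
              stdGaussianCDF ((∑ k, q.1 k * X i ω k - q.2) / h n1)
            - (μ1 {x | q.2 < ∑ k, q.1 k * x k}).toReal|)
          '' {q | ‖q.1‖ = 1}))
      atTop (𝓝 0) := by
  classical
  -- restate Lipschitz via `lin`
  have hLip' : ∀ θ : EuclideanSpace ℝ (Fin p), ‖θ‖ = 1 → ∀ s u : ℝ,
      |(μ1 {x | lin θ x ≤ s}).toReal - (μ1 {x | lin θ x ≤ u}).toReal| ≤ M * |s - u| := hLip
  have hmeasHS : ∀ (θ : EuclideanSpace ℝ (Fin p)) (d : ℝ),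
      MeasurableSet {x | d < lin θ x} :=
    fun θ d => measurableSet_lt measurable_const (measurable_lin θ)
  have hmeasLE : ∀ (θ : EuclideanSpace ℝ (Fin p)) (d : ℝ),
      MeasurableSet {x | lin θ x ≤ d} :=
    fun θ d => measurableSet_le (measurable_lin θ) measurable_const
  have hcompl : ∀ (θ : EuclideanSpace ℝ (Fin p)) (a : ℝ),
      {x : EuclideanSpace ℝ (Fin p) | a < lin θ x} = {x | lin θ x ≤ a}ᶜ := by
    intro θ a
    ext x
    simp [not_le]
  have hGF : ∀ (θ : EuclideanSpace ℝ (Fin p)) (a : ℝ),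
      (μ1 {x | a < lin θ x}).toReal = 1 - (μ1 {x | lin θ x ≤ a}).toReal := by
    intro θ a
    rw [hcompl θ a, mtoReal_compl μ1 (hmeasLE θ a)]
  -- the key ε-level statement
  have key : ∀ ε : ℝ, 0 < ε → ε ≤ 1 → ∀ᵐ ω ∂P, ∀ᶠ n : ℕ in atTop,
      ∀ (θ : EuclideanSpace ℝ (Fin p)) (δ : ℝ), ‖θ‖ = 1 →
      |(n : ℝ)⁻¹ * ∑ i ∈ Finset.range n, stdGaussianCDF ((lin θ (X i ω) - δ) / h n)
        - (μ1 {x | δ < lin θ x}).toReal| ≤ (4 * M + 5) * ε := by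
    intro ε hε hε1
    -- deterministic bandwidth limits
    have hinv : Tendsto (fun n => (h n)⁻¹) atTop atTop :=
      tendsto_inv_nhdsGT_zero.comp (tendsto_nhdsWithin_iff.mpr
        ⟨hlim, Eventually.of_forall fun n => Set.mem_Ioi.mpr (hpos n)⟩)
    have hdiv : Tendsto (fun n => ε / h n) atTop atTop := by
      simpa [div_eq_mul_inv] using hinv.const_mul_atTop hε
    have htneg : Tendsto (fun n => stdGaussianCDF (-ε / h n)) atTop (𝓝 0) := by
      have h1 : Tendsto (fun n => -(ε / h n)) atTop atBot := tendsto_neg_atTop_atBot.comp hdiv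
      have h2 := cdf_tendsto_atBot.comp h1
      simpa [Function.comp_def, neg_div] using h2
    have hts : Tendsto (fun n => (1 : ℝ) - stdGaussianCDF (ε / h n)) atTop (𝓝 0) := by
      have h1 := cdf_tendsto_atTop.comp hdiv
      have h2 := tendsto_const_nhds (x := (1 : ℝ)) (f := atTop (α := ℕ)) |>.sub h1
      simpa using h2
    -- choice of R
    have hRex : ∃ R : ℝ, 0 < R ∧ (μ1 {x : EuclideanSpace ℝ (Fin p) | R < ‖x‖}).toReal ≤ ε := by
      set s : ℕ → Set (EuclideanSpace ℝ (Fin p)) := fun n => {x | (n : ℝ) < ‖x‖} with hs_def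
      have hmeas : ∀ n, MeasurableSet (s n) :=
        fun n => measurableSet_lt measurable_const measurable_norm
      have hanti : Antitone s := by
        intro m n hmn x hx
        simp only [hs_def, Set.mem_setOf_eq] at hx ⊢
        have : (m : ℝ) ≤ (n : ℝ) := by exact_mod_cast hmn
        linarith
      have hint : (⋂ n, s n) = ∅ := by
        ext x
        simp only [hs_def, Set.mem_iInter, Set.mem_setOf_eq, Set.mem_empty_iff_false, iff_false,
          not_forall, not_lt]
        obtain ⟨n, hn⟩ := exists_nat_gt ‖x‖
        exact ⟨n, hn.le⟩
      have htend := tendsto_measure_iInter_atTop (μ := μ1)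
        (fun n => (hmeas n).nullMeasurableSet) hanti ⟨0, measure_ne_top _ _⟩
      rw [hint, measure_empty] at htend
      have htoReal : Tendsto (fun n => (μ1 (s n)).toReal) atTop (𝓝 0) := by
        have := (ENNReal.tendsto_toReal (by simp)).comp htend
        simpa [Function.comp_def] using this
      obtain ⟨n0, hn0⟩ := (htoReal.eventually (eventually_le_nhds hε)).exists
      refine ⟨(n0 : ℝ) + 1, by positivity, ?_⟩
      refine le_trans (mtoReal_mono μ1 ?_) hn0
      intro x hx
      simp only [hs_def, Set.mem_setOf_eq] at hx ⊢
      linarith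
    obtain ⟨R, hR, hb⟩ := hRex
    -- net and grid
    obtain ⟨T, hT1, hTnet⟩ := exists_sphere_net (p := p) (ε / R) (by positivity)
    obtain ⟨D, hD⟩ := exists_grid (-(R + 3) - 2) ((R + 3) + 3) ε hε
    -- almost sure events
    have hae1 : ∀ᵐ ω ∂P, ∀ q ∈ (↑(T ×ˢ D) : Set (EuclideanSpace ℝ (Fin p) × ℝ)),
        Tendsto (fun n : ℕ => (n : ℝ)⁻¹ * ∑ i ∈ Finset.range n,
            ({x | q.2 < lin q.1 x}).indicator (fun _ => (1 : ℝ)) (X i ω))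
          atTop (𝓝 (μ1 {x | q.2 < lin q.1 x}).toReal) :=
      (ae_ball_iff (Finset.countable_toSet _)).2 fun q _ =>
        slln_indicator P μ1 X hXm hindep hid _ (hmeasHS q.1 q.2)
    have hae2 := slln_indicator P μ1 X hXm hindep hid
      {x : EuclideanSpace ℝ (Fin p) | R < ‖x‖}
      (measurableSet_lt measurable_const measurable_norm)
    filter_upwards [hae1, hae2] with ω hω1 hω2
    -- eventual (in n) statements
    have hev1 : ∀ᶠ n : ℕ in atTop, ∀ q ∈ T ×ˢ D,
        |(n : ℝ)⁻¹ * ∑ i ∈ Finset.range n,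
            ({x | q.2 < lin q.1 x}).indicator (fun _ => (1 : ℝ)) (X i ω)
          - (μ1 {x | q.2 < lin q.1 x}).toReal| ≤ ε := by
      rw [Filter.eventually_all_finset]
      intro q hq
      have h1 := hω1 q hq
      have h2 := h1.eventually (Metric.closedBall_mem_nhds _ hε)
      filter_upwards [h2] with n hn
      have h3 := Metric.mem_closedBall.mp hn
      rwa [Real.dist_eq] at h3
    have hev2 : ∀ᶠ n : ℕ in atTop, (n : ℝ)⁻¹ * ∑ i ∈ Finset.range n,
        ({x : EuclideanSpace ℝ (Fin p) | R < ‖x‖}).indicator (fun _ => (1 : ℝ)) (X i ω)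
          ≤ 2 * ε :=
      hω2.eventually (eventually_le_nhds (by linarith))
    have hev3 : ∀ᶠ n : ℕ in atTop, stdGaussianCDF (-ε / h n) ≤ ε :=
      htneg.eventually (eventually_le_nhds hε)
    have hev4 : ∀ᶠ n : ℕ in atTop, (1 : ℝ) - stdGaussianCDF (ε / h n) ≤ ε :=
      hts.eventually (eventually_le_nhds hε)
    filter_upwards [hev1, hev2, hev3, hev4, eventually_ge_atTop 1] with n hg hB ht hs hn1
    intro θ δ hθ
    have hn0 : ((n : ℝ)) ≠ 0 := by
      have : (0 : ℝ) < n := by exact_mod_cast hn1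
      exact ne_of_gt this
    have ht0 : 0 ≤ stdGaussianCDF (-ε / h n) := cdf_nonneg _
    have hs0 : 0 ≤ (1 : ℝ) - stdGaussianCDF (ε / h n) := by linarith [cdf_le_one (ε / h n)]
    have hB0 : 0 ≤ (n : ℝ)⁻¹ * ∑ i ∈ Finset.range n,
        ({x : EuclideanSpace ℝ (Fin p) | R < ‖x‖}).indicator (fun _ => (1 : ℝ)) (X i ω) := by
      apply mul_nonneg (by positivity)
      exact Finset.sum_nonneg fun i _ => ind_nonneg _ _
    -- bounds on A_n and G
    have hA0 : 0 ≤ (n : ℝ)⁻¹ * ∑ i ∈ Finset.range n,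
        stdGaussianCDF ((lin θ (X i ω) - δ) / h n) := by
      apply mul_nonneg (by positivity)
      exact Finset.sum_nonneg fun i _ => cdf_nonneg _
    have hA1 : (n : ℝ)⁻¹ * ∑ i ∈ Finset.range n,
        stdGaussianCDF ((lin θ (X i ω) - δ) / h n) ≤ 1 := by
      have h1 : ∑ i ∈ Finset.range n, stdGaussianCDF ((lin θ (X i ω) - δ) / h n)
          ≤ ∑ _i ∈ Finset.range n, (1 : ℝ) :=
        Finset.sum_le_sum fun i _ => cdf_le_one _
      rw [Finset.sum_const, Finset.card_range, nsmul_eq_mul, mul_one] at h1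
      calc (n : ℝ)⁻¹ * ∑ i ∈ Finset.range n, stdGaussianCDF ((lin θ (X i ω) - δ) / h n)
          ≤ (n : ℝ)⁻¹ * n := mul_le_mul_of_nonneg_left h1 (by positivity)
        _ = 1 := inv_mul_cancel₀ hn0
    have hG0 : 0 ≤ (μ1 {x | δ < lin θ x}).toReal := ENNReal.toReal_nonneg
    have hG1 : (μ1 {x | δ < lin θ x}).toReal ≤ 1 := mtoReal_le_one μ1 _
    have habs : ∀ x : EuclideanSpace ℝ (Fin p), |lin θ x| ≤ ‖x‖ := by
      intro x
      have := abs_lin_le θ x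
      rwa [hθ, one_mul] at this
    rcases le_or_gt (R + 3) δ with hcase | hcase
    · -- HIGH tail : δ ≥ R + 3
      have hup : (n : ℝ)⁻¹ * ∑ i ∈ Finset.range n, stdGaussianCDF ((lin θ (X i ω) - δ) / h n)
          ≤ (n : ℝ)⁻¹ * ∑ i ∈ Finset.range n,
              ({x : EuclideanSpace ℝ (Fin p) | R < ‖x‖}).indicator (fun _ => (1 : ℝ)) (X i ω)
            + stdGaussianCDF (-ε / h n) := by
        apply avg1_le hn1
        intro i _
        by_cases hx : X i ω ∈ {x : EuclideanSpace ℝ (Fin p) | R < ‖x‖}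
        · rw [Set.indicator_of_mem hx]
          have := cdf_le_one ((lin θ (X i ω) - δ) / h n)
          linarith
        · rw [Set.indicator_of_notMem hx]
          have hxR : ‖X i ω‖ ≤ R := le_of_not_gt hx
          have hu : lin θ (X i ω) ≤ R := le_trans (le_abs_self _) ((habs _).trans hxR)
          have harg : (lin θ (X i ω) - δ) / h n ≤ -ε / h n :=
            div_le_div_of_nonneg_right (by linarith) (hpos n).le
          have := cdf_mono harg
          linarith
      have hGb : (μ1 {x | δ < lin θ x}).toReal
          ≤ (μ1 {x : EuclideanSpace ℝ (Fin p) | R < ‖x‖}).toReal := by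
        apply mtoReal_mono μ1
        intro x hx
        simp only [Set.mem_setOf_eq] at hx ⊢
        have h1 : lin θ x ≤ |lin θ x| := le_abs_self _
        have h2 := habs x
        linarith
      have hpos1 : (0 : ℝ) ≤ (4 * M + 2) * ε := by positivity
      have hpos2 : (0 : ℝ) ≤ (4 * M + 4) * ε := by positivity
      rw [abs_le]
      constructor <;> linarith
    rcases le_or_gt δ (-(R + 3)) with hcase2 | hcase2
    · -- LOW tail : δ ≤ -(R+3)
      have hlow : (n : ℝ)⁻¹ * ∑ i ∈ Finset.range n,
          ((1 : ℝ) - ({x : EuclideanSpace ℝ (Fin p) | R < ‖x‖}).indicator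
            (fun _ => (1 : ℝ)) (X i ω))
          ≤ (n : ℝ)⁻¹ * ∑ i ∈ Finset.range n, stdGaussianCDF ((lin θ (X i ω) - δ) / h n)
            + ((1 : ℝ) - stdGaussianCDF (ε / h n)) := by
        apply avg1_le hn1
        intro i _
        by_cases hx : X i ω ∈ {x : EuclideanSpace ℝ (Fin p) | R < ‖x‖}
        · rw [Set.indicator_of_mem hx]
          have := cdf_nonneg ((lin θ (X i ω) - δ) / h n)
          linarith
        · rw [Set.indicator_of_notMem hx]
          have hxR : ‖X i ω‖ ≤ R := le_of_not_gt hx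
          have hu : -R ≤ lin θ (X i ω) := by
            have h1 := neg_abs_le (lin θ (X i ω))
            have h2 := habs (X i ω)
            linarith
          have harg : ε / h n ≤ (lin θ (X i ω) - δ) / h n :=
            div_le_div_of_nonneg_right (by linarith) (hpos n).le
          have := cdf_mono harg
          linarith
      have havg1 : (n : ℝ)⁻¹ * ∑ i ∈ Finset.range n,
          ((1 : ℝ) - ({x : EuclideanSpace ℝ (Fin p) | R < ‖x‖}).indicator
            (fun _ => (1 : ℝ)) (X i ω))
          = 1 - (n : ℝ)⁻¹ * ∑ i ∈ Finset.range n,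
              ({x : EuclideanSpace ℝ (Fin p) | R < ‖x‖}).indicator (fun _ => (1 : ℝ)) (X i ω) := by
        rw [Finset.sum_sub_distrib, Finset.sum_const, Finset.card_range, nsmul_eq_mul, mul_one,
          mul_sub, inv_mul_cancel₀ hn0]
      rw [havg1] at hlow
      have hFb : (μ1 {x | lin θ x ≤ δ}).toReal
          ≤ (μ1 {x : EuclideanSpace ℝ (Fin p) | R < ‖x‖}).toReal := by
        apply mtoReal_mono μ1
        intro x hx
        simp only [Set.mem_setOf_eq] at hx ⊢
        have h1 := neg_abs_le (lin θ x)
        have h2 := habs x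
        linarith
      have hGge : 1 - ε ≤ (μ1 {x | δ < lin θ x}).toReal := by
        rw [hGF θ δ]
        linarith
      rw [abs_le]
      have hpos1 : (0 : ℝ) ≤ (4 * M + 2) * ε := by positivity
      have hpos2 : (0 : ℝ) ≤ (4 * M + 4) * ε := by positivity
      constructor <;> linarith
    · -- MIDDLE case : -(R+3) < δ < R+3
      obtain ⟨θ', hθ'T, hθθ'⟩ := hTnet θ hθ
      have hθ'1 : ‖θ'‖ = 1 := hT1 θ' hθ'T
      have hclose : ∀ x : EuclideanSpace ℝ (Fin p), ‖x‖ ≤ R → |lin θ x - lin θ' x| ≤ ε := by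
        intro x hxR
        rw [lin_sub]
        calc |lin (θ - θ') x| ≤ ‖θ - θ'‖ * ‖x‖ := abs_lin_le _ _
          _ ≤ (ε / R) * R := by
              apply mul_le_mul hθθ'.le hxR (norm_nonneg x) (by positivity)
          _ = ε := div_mul_cancel₀ ε (ne_of_gt hR)
      obtain ⟨d, hdD, hd1, hd2⟩ := hD (δ - 2 * ε) ⟨by linarith, by linarith⟩
      obtain ⟨d', hd'D, hd'1, hd'2⟩ := hD (δ + 3 * ε) ⟨by linarith, by linarith⟩
      -- grid error bounds
      have hGn := hg (θ', d) (Finset.mem_product.mpr ⟨hθ'T, hdD⟩)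
      have hGn' := hg (θ', d') (Finset.mem_product.mpr ⟨hθ'T, hd'D⟩)
      dsimp only at hGn hGn'
      obtain ⟨hGnl, hGnu⟩ := abs_le.mp hGn
      obtain ⟨hGnl', hGnu'⟩ := abs_le.mp hGn'
      -- UPPER chain
      have hup : (n : ℝ)⁻¹ * ∑ i ∈ Finset.range n, stdGaussianCDF ((lin θ (X i ω) - δ) / h n)
          ≤ (n : ℝ)⁻¹ * ∑ i ∈ Finset.range n,
              ({x | d < lin θ' x}).indicator (fun _ => (1 : ℝ)) (X i ω)
            + (n : ℝ)⁻¹ * ∑ i ∈ Finset.range n,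
              ({x : EuclideanSpace ℝ (Fin p) | R < ‖x‖}).indicator (fun _ => (1 : ℝ)) (X i ω)
            + stdGaussianCDF (-ε / h n) := by
        apply avg2_le hn1
        intro i _
        by_cases hx : X i ω ∈ {x : EuclideanSpace ℝ (Fin p) | R < ‖x‖}
        · rw [Set.indicator_of_mem hx]
          have h1 := cdf_le_one ((lin θ (X i ω) - δ) / h n)
          have h2 := ind_nonneg {x | d < lin θ' x} (X i ω)
          linarith
        · rw [Set.indicator_of_notMem hx]
          have hxR : ‖X i ω‖ ≤ R := le_of_not_gt hx
          have hcl := abs_le.mp (hclose (X i ω) hxR)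
          by_cases hu : δ - ε < lin θ (X i ω)
          · have hmem : X i ω ∈ {x | d < lin θ' x} := by
              simp only [Set.mem_setOf_eq]
              linarith [hcl.2]
            rw [Set.indicator_of_mem hmem]
            have h1 := cdf_le_one ((lin θ (X i ω) - δ) / h n)
            linarith
          · push_neg at hu
            have harg : (lin θ (X i ω) - δ) / h n ≤ -ε / h n :=
              div_le_div_of_nonneg_right (by linarith) (hpos n).le
            have h1 := cdf_mono harg
            have h2 := ind_nonneg {x | d < lin θ' x} (X i ω)
            linarith
      -- comparison of true measures, upper
      have hsub1 : (μ1 {x | d < lin θ' x}).toReal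
          ≤ (μ1 {x | d - ε < lin θ x}).toReal
            + (μ1 {x : EuclideanSpace ℝ (Fin p) | R < ‖x‖}).toReal := by
        refine le_trans (mtoReal_mono μ1 ?_) (mtoReal_union_le μ1 _ _)
        intro x hx
        by_cases hxb : x ∈ {x : EuclideanSpace ℝ (Fin p) | R < ‖x‖}
        · exact Or.inr hxb
        · left
          simp only [Set.mem_setOf_eq] at hx ⊢
          have hcl := abs_le.mp (hclose x (le_of_not_gt hxb))
          linarith [hcl.1]
      have hlip1 : (μ1 {x | d - ε < lin θ x}).toReal
          ≤ (μ1 {x | δ < lin θ x}).toReal + M * (4 * ε) := by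
        have h1 := hLip' θ hθ δ (d - ε)
        rw [abs_of_nonneg (by linarith : (0:ℝ) ≤ δ - (d - ε))] at h1
        obtain ⟨h1l, h1r⟩ := abs_le.mp h1
        have h2 : M * (δ - (d - ε)) ≤ M * (4 * ε) :=
          mul_le_mul_of_nonneg_left (by linarith) hM.le
        rw [hGF θ (d - ε), hGF θ δ]
        linarith
      -- LOWER chain
      have hlo : (n : ℝ)⁻¹ * ∑ i ∈ Finset.range n,
            ({x | d' < lin θ' x}).indicator (fun _ => (1 : ℝ)) (X i ω)
          ≤ (n : ℝ)⁻¹ * ∑ i ∈ Finset.range n, stdGaussianCDF ((lin θ (X i ω) - δ) / h n)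
            + (n : ℝ)⁻¹ * ∑ i ∈ Finset.range n,
              ({x : EuclideanSpace ℝ (Fin p) | R < ‖x‖}).indicator (fun _ => (1 : ℝ)) (X i ω)
            + ((1 : ℝ) - stdGaussianCDF (ε / h n)) := by
        apply avg2_le hn1
        intro i _
        by_cases hx : X i ω ∈ {x : EuclideanSpace ℝ (Fin p) | R < ‖x‖}
        · rw [Set.indicator_of_mem hx]
          have h1 := ind_le_one {x | d' < lin θ' x} (X i ω)
          have h2 := cdf_nonneg ((lin θ (X i ω) - δ) / h n)
          linarith
        · rw [Set.indicator_of_notMem hx]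
          have hxR : ‖X i ω‖ ≤ R := le_of_not_gt hx
          have hcl := abs_le.mp (hclose (X i ω) hxR)
          by_cases hx1 : X i ω ∈ {x | d' < lin θ' x}
          · rw [Set.indicator_of_mem hx1]
            simp only [Set.mem_setOf_eq] at hx1
            have harg : ε / h n ≤ (lin θ (X i ω) - δ) / h n :=
              div_le_div_of_nonneg_right (by linarith [hcl.2]) (hpos n).le
            have h1 := cdf_mono harg
            linarith
          · rw [Set.indicator_of_notMem hx1]
            have h1 := cdf_nonneg ((lin θ (X i ω) - δ) / h n)
            linarith
      have hsub2 : (μ1 {x | d' + ε < lin θ x}).toReal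
          ≤ (μ1 {x | d' < lin θ' x}).toReal
            + (μ1 {x : EuclideanSpace ℝ (Fin p) | R < ‖x‖}).toReal := by
        refine le_trans (mtoReal_mono μ1 ?_) (mtoReal_union_le μ1 _ _)
        intro x hx
        by_cases hxb : x ∈ {x : EuclideanSpace ℝ (Fin p) | R < ‖x‖}
        · exact Or.inr hxb
        · left
          simp only [Set.mem_setOf_eq] at hx ⊢
          have hcl := abs_le.mp (hclose x (le_of_not_gt hxb))
          linarith [hcl.2]
      have hlip2 : (μ1 {x | δ < lin θ x}).toReal
          ≤ (μ1 {x | d' + ε < lin θ x}).toReal + M * (4 * ε) := by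
        have h1 := hLip' θ hθ (d' + ε) δ
        rw [abs_of_nonneg (by linarith : (0:ℝ) ≤ d' + ε - δ)] at h1
        obtain ⟨h1l, h1r⟩ := abs_le.mp h1
        have h2 : M * (d' + ε - δ) ≤ M * (4 * ε) :=
          mul_le_mul_of_nonneg_left (by linarith) hM.le
        rw [hGF θ (d' + ε), hGF θ δ]
        linarith
      rw [abs_le]
      constructor
      · linarith
      · linarith
  -- final assembly
  have hae := ae_all_iff.2 fun m : ℕ => key (1 / ((m : ℝ) + 1))
    (by positivity)
    (by rw [div_le_one (by positivity)]; linarith [Nat.cast_nonneg (α := ℝ) m])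
  filter_upwards [hae] with ω hω
  rw [Metric.tendsto_atTop]
  intro ε' hε'
  obtain ⟨m, hm⟩ := exists_nat_gt ((4 * M + 5) / ε')
  have hev := hω m
  rw [eventually_atTop] at hev
  obtain ⟨N, hN⟩ := hev
  refine ⟨N, fun n hn => ?_⟩
  have hbnd := hN n hn
  have hc : (4 * M + 5) * (1 / ((m : ℝ) + 1)) < ε' := by
    have h1 : 4 * M + 5 < (m : ℝ) * ε' := (div_lt_iff₀ hε').mp hm
    have h2 : (m : ℝ) * ε' ≤ ((m : ℝ) + 1) * ε' := by nlinarith [Nat.cast_nonneg (α := ℝ) m]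
    rw [mul_one_div, div_lt_iff₀ (by positivity)]
    nlinarith [Nat.cast_nonneg (α := ℝ) m]
  have h0 : 0 ≤ sSup ((fun q : EuclideanSpace ℝ (Fin p) × ℝ =>
      |(n : ℝ)⁻¹ * ∑ i ∈ Finset.range n,
          stdGaussianCDF ((∑ k, q.1 k * X i ω k - q.2) / h n)
        - (μ1 {x | q.2 < ∑ k, q.1 k * x k}).toReal|) '' {q | ‖q.1‖ = 1}) := by
    apply Real.sSup_nonneg
    rintro y ⟨q, hq, rfl⟩
    exact abs_nonneg _
  have hU : sSup ((fun q : EuclideanSpace ℝ (Fin p) × ℝ =>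
      |(n : ℝ)⁻¹ * ∑ i ∈ Finset.range n,
          stdGaussianCDF ((∑ k, q.1 k * X i ω k - q.2) / h n)
        - (μ1 {x | q.2 < ∑ k, q.1 k * x k}).toReal|) '' {q | ‖q.1‖ = 1})
      ≤ (4 * M + 5) * (1 / ((m : ℝ) + 1)) := by
    apply Real.sSup_le
    · rintro y ⟨⟨θ, δ⟩, hq, rfl⟩
      exact hbnd θ δ hq
    · positivity
  rw [Real.dist_0_eq_abs, abs_of_nonneg h0]
  exact lt_of_le_of_lt hU hc
end
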